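/- Let g ≥ 1 and let F be the free group on the 2g generators u₁, v₁, …, u_g, v_g. Then the product of commutators w = [u₁, v₁][u₂, v₂]⋯[u_g, v_g] is not a proper power in F: there is no element θ ∈ F and no integer n ≥ 2 such that w = θⁿ. -/

import Mathlib

open FreeGroup List
open scoped commutatorElement
set_option linter.unusedSectionVars false

variable {α : Type*} [DecidableEq α]

/-- A word is reduced: no adjacent cancelling pair. -/
def IsRed (L : List (α × Bool)) : Prop :=
  List.Chain' (fun x y => y ≠ (x.1, !x.2)) L

/-- Boundary compatibility between two words. -/
def Bd (X Y : List (α × Bool)) : Prop :=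
  ∀ x ∈ X.getLast?, ∀ y ∈ Y.head?, y ≠ (x.1, !x.2)

lemma isRed_append {X Y : List (α × Bool)} (hX : IsRed X) (hY : IsRed Y) (h : Bd X Y) :
    IsRed (X ++ Y) := List.isChain_append.mpr ⟨hX, hY, h⟩

lemma isRed_reduce (L : List (α × Bool)) : IsRed (reduce L) := by
  induction L with
  | nil => exact List.isChain_nil
  | cons x L ih =>
      rw [FreeGroup.reduce.cons]
      rcases h : reduce L with _ | ⟨hd, tl⟩
      · exact List.isChain_singleton x
      · rw [h] at ih
        show IsRed (if x.1 = hd.1 ∧ x.2 = !hd.2 then tl else x :: hd :: tl)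
        by_cases hc : x.1 = hd.1 ∧ x.2 = !hd.2
        · rw [if_pos hc]; exact ih.tail
        · rw [if_neg hc]
          refine List.isChain_cons_cons.mpr ⟨?_, ih⟩
          rintro rfl
          exact hc ⟨rfl, by simp⟩

lemma IsRed.not_step {L L' : List (α × Bool)} (h : IsRed L) : ¬ FreeGroup.Red.Step L L' := by
  intro hs
  cases hs with
  | @not L₁ L₂ x b =>
      have : IsRed [(x, b), (x, !b)] :=
        h.infix ⟨L₁, L₂, by simp⟩
      exact (List.isChain_cons_cons.mp this).1 rfl

lemma IsRed.reduce_eq {L : List (α × Bool)} (h : IsRed L) : reduce L = L := by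
  have := FreeGroup.reduce.red (L := L)
  exact (Relation.reflTransGen_iff_eq fun _ hs => h.not_step hs).mp this

lemma IsRed.toWord_mk {L : List (α × Bool)} (h : IsRed L) : (FreeGroup.mk L).toWord = L := by
  rw [FreeGroup.toWord_mk, h.reduce_eq]

lemma isRed_toWord (x : FreeGroup α) : IsRed x.toWord := by
  rw [← FreeGroup.reduce_toWord]; exact isRed_reduce _

lemma invRev_eq (L : List (α × Bool)) :
    invRev L = (L.map fun p => (p.1, !p.2)).reverse := rfl

lemma isRed_invRev {L : List (α × Bool)} (h : IsRed L) : IsRed (invRev L) := by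
  rw [invRev_eq, IsRed, List.Chain', List.isChain_reverse, List.isChain_map]
  refine h.imp ?_
  rintro ⟨a, b⟩ ⟨c, d⟩ hx
  simp only [flip]
  intro he
  apply hx
  simp only [Prod.mk.injEq] at he ⊢
  obtain ⟨h1, h2⟩ := he
  exact ⟨h1.symm, by simpa using h2.symm⟩

lemma head?_invRev (L : List (α × Bool)) :
    (invRev L).head? = L.getLast?.map fun p => (p.1, !p.2) := by
  rw [invRev_eq, List.head?_reverse, List.getLast?_map]

lemma getLast?_invRev (L : List (α × Bool)) :
    (invRev L).getLast? = L.head?.map fun p => (p.1, !p.2) := by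
  rw [invRev_eq, List.getLast?_reverse, List.head?_map]

lemma mk_pow (C : List (α × Bool)) (m : ℕ) :
    (FreeGroup.mk C) ^ m = FreeGroup.mk (List.replicate m C).flatten := by
  induction m with
  | zero => simp [FreeGroup.one_eq_mk]
  | succ k ih =>
      rw [pow_succ', List.replicate_succ, List.flatten_cons, ← FreeGroup.mul_mk, ih]

lemma flat_head (C : List (α × Bool)) (m : ℕ) (hm : 1 ≤ m) :
    ((List.replicate m C).flatten).head? = C.head? := by
  obtain ⟨k, rfl⟩ : ∃ k, m = k + 1 := ⟨m - 1, by omega⟩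
  rw [List.replicate_succ, List.flatten_cons]
  rcases C with _ | ⟨c, C⟩
  · induction k with
    | zero => simp
    | succ j ih => simpa [List.replicate_succ] using ih (by omega)
  · simp

lemma flat_getLast (C : List (α × Bool)) (m : ℕ) (hm : 1 ≤ m) :
    ((List.replicate m C).flatten).getLast? = C.getLast? := by
  induction m with
  | zero => omega
  | succ k ih =>
      rw [List.replicate_succ, List.flatten_cons]
      rcases Nat.eq_zero_or_pos k with rfl | hk
      · simp
      · rw [List.getLast?_append]
        rw [ih hk]
        rcases C with _ | ⟨c, C⟩
        · simp
        · rw [Option.or_of_isSome]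
          rw [List.getLast?_isSome]
          simp

lemma flat_isRed (C : List (α × Bool)) (hC : IsRed C) (hcyc : Bd C C) (m : ℕ) :
    IsRed ((List.replicate m C).flatten) := by
  induction m with
  | zero => exact List.isChain_nil
  | succ k ih =>
      rw [List.replicate_succ, List.flatten_cons]
      refine isRed_append hC ih ?_
      rcases Nat.eq_zero_or_pos k with rfl | hk
      · intro x hx y hy; simp at hy
      · intro x hx y hy
        rw [flat_head C k hk] at hy
        exact hcyc x hx y hy

/-- Cyclic reduction decomposition. -/
lemma decomp : ∀ (N : ℕ) (x : FreeGroup α), x.toWord.length ≤ N →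
    ∃ A C, x = FreeGroup.mk A * FreeGroup.mk C * (FreeGroup.mk A)⁻¹ ∧ Bd C C ∧
      x.toWord = A ++ C ++ invRev A := by
  intro N
  induction N with
  | zero =>
      intro x hx
      rw [Nat.le_zero, List.length_eq_zero_iff] at hx
      refine ⟨[], [], ?_, ?_, ?_⟩
      · have h1 : x = 1 := FreeGroup.toWord_eq_nil_iff.mp hx
        rw [h1, ← FreeGroup.one_eq_mk]
        group
      · intro x hx; simp at hx
      · simp [hx, invRev]
  | succ N IH =>
      intro x hx
      by_cases hbd : Bd x.toWord x.toWord
      · refine ⟨[], x.toWord, ?_, hbd, by simp [invRev]⟩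
        rw [← FreeGroup.one_eq_mk, FreeGroup.mk_toWord]
        group
      · simp only [Bd, not_forall] at hbd
        obtain ⟨xl, hxl, y, hy, hxy⟩ := hbd
        rw [not_ne_iff] at hxy
        rcases hT : x.toWord with _ | ⟨y', T⟩
        · rw [hT] at hy; simp at hy
        rw [hT] at hy hxl
        simp only [List.head?_cons, Option.mem_some_iff] at hy
        subst hy
        have hTne : T ≠ [] := by
          rintro rfl
          obtain rfl : y' = xl := by simpa using hxl
          have h2 := congrArg Prod.snd hxy
          simp at h2
        have hxl' : xl = T.getLast hTne := by
          rw [List.getLast?_eq_getLast_of_ne_nil (List.cons_ne_nil y' T),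
            List.getLast_cons hTne] at hxl
          simp only [Option.mem_some_iff] at hxl
          exact hxl.symm
        set M := T.dropLast with hM
        have hTeq : T = M ++ [xl] := by
          rw [hM, hxl']; exact (List.dropLast_append_getLast hTne).symm
        -- M is reduced
        have hredx : IsRed x.toWord := isRed_toWord x
        have hMred : IsRed M := by
          refine hredx.infix ⟨[y'], [xl], ?_⟩
          rw [hT, hTeq]; simp
        have hMword : (FreeGroup.mk M).toWord = M := hMred.toWord_mk
        have hlen : (FreeGroup.mk M).toWord.length ≤ N := by
          rw [hMword]
          have : x.toWord.length ≤ N + 1 := hx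
          rw [hT, hTeq] at this
          simp only [List.length_cons, List.length_append, List.length_singleton] at this
          omega
        obtain ⟨A', C, hmk, hC, hword⟩ := IH (FreeGroup.mk M) hlen
        rw [hMword] at hword
        have hxlny : xl = (y'.1, !y'.2) := by
          rw [hxy]; simp
        refine ⟨y' :: A', C, ?_, hC, ?_⟩
        · have h1 : x = FreeGroup.mk x.toWord := (FreeGroup.mk_toWord).symm
          rw [hT, hTeq] at h1
          have h2 : (y' :: (M ++ [xl]) : List (α × Bool)) = [y'] ++ M ++ [xl] := by simp
          rw [h2, ← FreeGroup.mul_mk, ← FreeGroup.mul_mk] at h1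
          have h3 : FreeGroup.mk [xl] = (FreeGroup.mk [y'])⁻¹ := by
            rw [FreeGroup.inv_mk]
            congr 1
            rw [invRev_eq, hxlny]
            simp
          have h4 : (FreeGroup.mk (y' :: A') : FreeGroup α) =
              FreeGroup.mk [y'] * FreeGroup.mk A' := by
            rw [FreeGroup.mul_mk]; simp
          rw [h1, h3, hmk, h4]
          group
        · have h5 : invRev (y' :: A') = invRev A' ++ [xl] := by
            rw [invRev_eq, invRev_eq, hxlny]
            simp
          rw [hTeq, h5, hword]
          simp

/-- The basic 4-letter commutator block. -/
def blk {g : ℕ} (i : Fin g) : List ((Fin g × Bool) × Bool) :=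
  [((i, false), true), ((i, true), true), ((i, false), false), ((i, true), false)]

/-- The word of the product of commutators. -/
def Wrd (g : ℕ) : List ((Fin g × Bool) × Bool) := (List.ofFn (blk (g := g))).flatten

lemma prod_map_mk (ls : List (List (α × Bool))) :
    (ls.map FreeGroup.mk).prod = FreeGroup.mk ls.flatten := by
  induction ls with
  | nil => simp [FreeGroup.one_eq_mk]
  | cons a l ih => simp [ih, FreeGroup.mul_mk]

lemma commOfGen (a b : α) :
    ⁅FreeGroup.of a, FreeGroup.of b⁆ =
      FreeGroup.mk [(a, true), (b, true), (a, false), (b, false)] := by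
  rw [commutatorElement_def]
  have hof : ∀ c : α, FreeGroup.of c = FreeGroup.mk [(c, true)] := fun _ => rfl
  have hinv : ∀ c : α, (FreeGroup.of c)⁻¹ = FreeGroup.mk [(c, false)] := by
    intro c
    rw [hof, FreeGroup.inv_mk, invRev_eq]
    simp
  rw [hof a, hof b, FreeGroup.inv_mk, FreeGroup.inv_mk, FreeGroup.mul_mk, FreeGroup.mul_mk,
    FreeGroup.mul_mk]
  simp [invRev_eq]

lemma w_eq (g : ℕ) :
    (List.ofFn fun i : Fin g =>
      ⁅FreeGroup.of (i, false), FreeGroup.of (i, true)⁆).prod = FreeGroup.mk (Wrd g) := by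
  have h1 : (List.ofFn fun i : Fin g =>
      ⁅FreeGroup.of (i, false), FreeGroup.of (i, true)⁆) = (List.ofFn (blk (g := g))).map
        FreeGroup.mk := by
    rw [List.map_ofFn]
    refine congrArg _ (funext fun i => ?_)
    simp only [Function.comp]
    rw [commOfGen]
    rfl
  rw [h1, prod_map_mk, Wrd]

lemma isRed_Wrd (g : ℕ) : IsRed (Wrd g) := by
  rw [Wrd, IsRed, List.Chain', List.isChain_flatten]
  · constructor
    · intro l hl
      rw [List.mem_ofFn] at hl
      obtain ⟨i, rfl⟩ := hl
      simp [blk, List.isChain_cons_cons, Prod.ext_iff]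
    · rw [List.isChain_ofFn]
      intro i hi x hx y hy
      simp only [blk, List.getLast?_cons_cons, List.getLast?_singleton,
        List.head?_cons, Option.mem_some_iff] at hx hy
      subst hx; subst hy
      simp [Prod.ext_iff]
  · intro hmem
    rw [List.mem_ofFn] at hmem
    obtain ⟨i, hi⟩ := hmem
    simp [blk] at hi

lemma head?_Wrd (g' : ℕ) :
    (Wrd (g' + 1)).head? = some (((0 : Fin (g' + 1)), false), true) := by
  rw [Wrd, List.ofFn_succ, List.flatten_cons]
  simp [blk]

lemma getLast?_Wrd (g' : ℕ) :
    (Wrd (g' + 1)).getLast? = some ((Fin.last g', true), false) := by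
  rw [Wrd, List.ofFn_succ', List.concat_eq_append, List.flatten_append, List.getLast?_append]
  simp [blk]

lemma count_flat {β : Type*} [BEq β] (x : β) (L : List (List β)) :
    L.flatten.count x = (L.map (List.count x)).sum := by
  induction L with
  | nil => simp
  | cons a l ih => simp [List.count_append, ih]

lemma count_Wrd (g' : ℕ) :
    (Wrd (g' + 1)).count (((0 : Fin (g' + 1)), false), true) = 1 := by
  rw [Wrd]
  rw [count_flat (((0 : Fin (g' + 1)), false), true) (List.ofFn blk), List.map_ofFn]
  have h1 : ∀ i : Fin (g' + 1),
      (List.count ((((0 : Fin (g' + 1)), false), true)) ∘ blk) i =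
        if i = 0 then 1 else 0 := by
    intro i
    by_cases h : i = 0
    · subst h
      simp [blk, List.count_cons]
    · simp only [Function.comp, blk, List.count_cons, List.count_nil, beq_iff_eq,
        Prod.mk.injEq, h, if_neg]
      simp [Ne.symm h, h]
  have h2 : (List.ofFn (List.count ((((0 : Fin (g' + 1)), false), true)) ∘ blk)) =
      List.ofFn (fun i : Fin (g' + 1) => if i = 0 then 1 else 0) :=
    congrArg _ (funext h1)
  rw [h2, List.sum_ofFn]
  simp

lemma isRed_append_iff (X Y : List (α × Bool)) :
    IsRed (X ++ Y) ↔ IsRed X ∧ IsRed Y ∧ Bd X Y :=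
  List.isChain_append

/-- The product of commutators `[u₁,v₁]⋯[u_g,v_g]` in the free group on
`u₁, v₁, …, u_g, v_g` is not a proper power. -/
theorem prod_commutators_not_proper_power (g : ℕ) (hg : 1 ≤ g)
    (θ : FreeGroup (Fin g × Bool)) (n : ℤ) (hn : 2 ≤ n) :
    θ ^ n ≠ (List.ofFn fun i : Fin g =>
      ⁅FreeGroup.of (i, false), FreeGroup.of (i, true)⁆).prod := by
  obtain ⟨g', rfl⟩ : ∃ g', g = g' + 1 := ⟨g - 1, by omega⟩
  intro h
  rw [w_eq] at h
  obtain ⟨m, rfl⟩ : ∃ m : ℕ, n = (m : ℤ) := ⟨n.toNat, by omega⟩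
  have hm : 2 ≤ m := by exact_mod_cast hn
  rw [zpow_natCast] at h
  obtain ⟨A, C, hθ, hCC, hword⟩ := decomp θ.toWord.length θ le_rfl
  have h6 : IsRed (A ++ C ++ invRev A) := by
    have h' := isRed_toWord θ; rwa [hword] at h'
  obtain ⟨h7, h8, h9⟩ := (isRed_append_iff _ _).mp h6
  obtain ⟨hA, hC, hAC⟩ := (isRed_append_iff _ _).mp h7
  rcases eq_or_ne C [] with rfl | hCne
  · have hθ1 : θ = 1 := by
      rw [hθ, ← FreeGroup.one_eq_mk]; group
    rw [hθ1, one_pow] at h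
    have h10 := congrArg FreeGroup.toWord h
    rw [FreeGroup.toWord_one, (isRed_Wrd _).toWord_mk] at h10
    have h11 := head?_Wrd g'
    rw [← h10] at h11
    simp at h11
  · have hDred := flat_isRed C hC hCC m
    have hD_head := flat_head C m (by omega)
    have hD_last := flat_getLast C m (by omega)
    set D := (List.replicate m C).flatten with hDdef
    have hDne : D ≠ [] := by
      intro hnil
      rw [hnil] at hD_head
      rcases C with _ | ⟨c, C⟩
      · exact hCne rfl
      · simp at hD_head
    have h2 : θ ^ m = FreeGroup.mk (A ++ D ++ invRev A) := by
      rw [hθ, conj_pow, mk_pow, ← hDdef, FreeGroup.inv_mk, FreeGroup.mul_mk, FreeGroup.mul_mk]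
    have hBdAD : Bd A D := by
      intro x hx y hy; rw [hD_head] at hy; exact hAC x hx y hy
    have hACl : (A ++ C).getLast? = C.getLast? := by
      rw [List.getLast?_append, Option.or_of_isSome (List.getLast?_isSome.mpr hCne)]
    have hBdCinv : Bd C (invRev A) := by
      intro x hx y hy
      refine h9 x ?_ y hy
      rw [hACl]; exact hx
    have hred2 : IsRed (A ++ D ++ invRev A) := by
      refine isRed_append (isRed_append hA hDred hBdAD) (isRed_invRev hA) ?_
      intro x hx y hy
      have hADlast : (A ++ D).getLast? = C.getLast? := by
        rw [List.getLast?_append, Option.or_of_isSome (List.getLast?_isSome.mpr hDne)]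
        exact hD_last
      rw [hADlast] at hx
      exact hBdCinv x hx y hy
    have hWD : A ++ D ++ invRev A = Wrd (g' + 1) := by
      have h12 := congrArg FreeGroup.toWord (h2.symm.trans h)
      rwa [hred2.toWord_mk, (isRed_Wrd _).toWord_mk] at h12
    have hAnil : A = [] := by
      by_contra hAne
      have hW_head := head?_Wrd g'
      have hW_last := getLast?_Wrd g'
      rw [← hWD] at hW_head hW_last
      have hInvne : invRev A ≠ [] := by
        intro hnil
        have := congrArg List.length hnil
        rw [FreeGroup.invRev_length] at this
        exact hAne (List.length_eq_zero_iff.mp this)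
      have h13 : (A ++ D ++ invRev A).head? = A.head? := by
        rw [List.head?_append_of_ne_nil, List.head?_append_of_ne_nil] <;>
          simp [hAne]
      have h14 : (A ++ D ++ invRev A).getLast? = (invRev A).getLast? := by
        rw [List.getLast?_append, Option.or_of_isSome (List.getLast?_isSome.mpr hInvne)]
      rw [h13] at hW_head
      rw [h14, getLast?_invRev, hW_head] at hW_last
      simp at hW_last
    rw [hAnil] at hWD
    simp only [List.nil_append, invRev_eq, List.map_nil, List.reverse_nil, List.append_nil] at hWD
    have hc1 := count_Wrd g'
    rw [← hWD] at hc1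
    have hc2 : D.count (((0 : Fin (g' + 1)), false), true) =
        m * C.count (((0 : Fin (g' + 1)), false), true) := by
      rw [hDdef, count_flat, List.map_replicate, List.sum_replicate, smul_eq_mul]
    rw [hc2] at hc1
    rcases Nat.eq_zero_or_pos (C.count (((0 : Fin (g' + 1)), false), true)) with h0 | h0
    · rw [h0] at hc1; omega
    · nlinarith [hc1]
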